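/- Assume f : α → ι is surjective and let N be the normalizer of P in Perm(α). Let K be the subgroup of Perm(ι) consisting of those permutations τ such that for every label l ∈ ι the fibre f⁻¹(l) and the fibre f⁻¹(τ(l)) have the same cardinality. Then the quotient group N / P is isomorphic to K. (In the classical language: the quotient of the normalizer of a Young subgroup W_λ of the symmetric group S_n by W_λ is isomorphic to the direct product ∏_k S_{a_k}, where a_k is the number of parts of λ equal to k.) -/

import Mathlib

/-- The Young-type subgroup of `Equiv.Perm α` associated to `f : α → ι`: the permutations
preserving every fibre of `f` (the pointwise stabilizer of the fibre partition of `f`). -/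
def youngSubgroup {α ι : Type*} (f : α → ι) : Subgroup (Equiv.Perm α) where
  carrier := {σ | ∀ a : α, f (σ a) = f a}
  one_mem' := fun _ => rfl
  mul_mem' := fun {σ τ} hσ hτ a => (hσ (τ a)).trans (hτ a)
  inv_mem' := fun {σ} hσ a => by
    have h := hσ (σ⁻¹ a)
    rw [show σ (σ⁻¹ a) = a from σ.apply_symm_apply a] at h
    exact h.symm

/-- The subgroup of `Equiv.Perm ι` of permutations `τ` such that for every label `l`
the fibres `f⁻¹(l)` and `f⁻¹(τ l)` have the same cardinality. -/
def fibreCardSubgroup {α ι : Type*} (f : α → ι) : Subgroup (Equiv.Perm ι) where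
  carrier := {τ | ∀ l : ι, Nat.card {a : α // f a = l} = Nat.card {a : α // f a = τ l}}
  one_mem' := fun _ => rfl
  mul_mem' := fun {σ τ} hσ hτ l => (hτ l).trans (hσ (τ l))
  inv_mem' := fun {τ} hτ l => by
    have h := hτ (τ⁻¹ l)
    rw [show τ (τ⁻¹ l) = l from τ.apply_symm_apply l] at h
    exact h.symm

instance {α ι : Type*} (f : α → ι) :
    ((youngSubgroup f).subgroupOf (Subgroup.normalizer (youngSubgroup f : Set (Equiv.Perm α)))).Normal :=
  Subgroup.normal_in_normalizer

theorem Equiv.Perm.apply_inv_self {α : Type*} (f : Equiv.Perm α) (x : α) : f (f⁻¹ x) = x :=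
  f.apply_symm_apply x

theorem Equiv.Perm.inv_apply_self {α : Type*} (f : Equiv.Perm α) (x : α) : f⁻¹ (f x) = x :=
  f.symm_apply_apply x

set_option linter.unusedSectionVars false

namespace NYQAux

variable {α ι : Type*} [DecidableEq α] (f : α → ι)

lemma mem_young_iff (σ : Equiv.Perm α) :
    σ ∈ youngSubgroup f ↔ ∀ a, f (σ a) = f a := Iff.rfl

lemma mem_normalizer_of_cover (σ : Equiv.Perm α) (τ : Equiv.Perm ι)
    (h : ∀ a, f (σ a) = τ (f a)) : σ ∈ (Subgroup.normalizer (youngSubgroup f : Set (Equiv.Perm α))) := by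
  rw [Subgroup.mem_normalizer_iff]
  intro p
  constructor
  · intro hp a
    simp only [Equiv.Perm.mul_apply]
    rw [h, hp, ← h, Equiv.Perm.apply_inv_self]
  · intro hp a
    have h2 := hp (σ a)
    simp only [Equiv.Perm.mul_apply, Equiv.Perm.inv_apply_self] at h2
    rw [h, h] at h2
    exact τ.injective h2

lemma apply_eq_of_mem_normalizer {σ : Equiv.Perm α}
    (hσ : σ ∈ (Subgroup.normalizer (youngSubgroup f : Set (Equiv.Perm α))))
    {a b : α} (h : f a = f b) : f (σ a) = f (σ b) := by
  by_cases hab : a = b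
  · subst hab; rfl
  · have hs : Equiv.swap a b ∈ youngSubgroup f := by
      intro x
      rcases eq_or_ne x a with rfl | hxa
      · rw [Equiv.swap_apply_left]; exact h.symm
      rcases eq_or_ne x b with rfl | hxb
      · rw [Equiv.swap_apply_right]; exact h
      · rw [Equiv.swap_apply_of_ne_of_ne hxa hxb]
    have hmem := ((Subgroup.mem_normalizer_iff.mp hσ) (Equiv.swap a b)).mp hs
    have h2 := hmem (σ a)
    simp only [Equiv.Perm.mul_apply, Equiv.Perm.inv_apply_self,
      Equiv.swap_apply_left] at h2
    exact h2.symm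

variable (hf : Function.Surjective f)

/-- The label permutation induced by an element of the normalizer. -/
noncomputable def labelPerm (σ : (Subgroup.normalizer (youngSubgroup f : Set (Equiv.Perm α)))) : Equiv.Perm ι where
  toFun l := f (σ.1 (Function.surjInv hf l))
  invFun l := f (σ.1⁻¹ (Function.surjInv hf l))
  left_inv l := by
    show f (σ.1⁻¹ (Function.surjInv hf (f (σ.1 (Function.surjInv hf l))))) = l
    have h1 : f (Function.surjInv hf (f (σ.1 (Function.surjInv hf l))))
        = f (σ.1 (Function.surjInv hf l)) := Function.surjInv_eq hf _
    have h2 := apply_eq_of_mem_normalizer f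
      (Subgroup.inv_mem _ σ.2 : σ.1⁻¹ ∈ (Subgroup.normalizer (youngSubgroup f : Set (Equiv.Perm α)))) h1
    rw [h2, Equiv.Perm.inv_apply_self, Function.surjInv_eq hf]
  right_inv l := by
    show f (σ.1 (Function.surjInv hf (f (σ.1⁻¹ (Function.surjInv hf l))))) = l
    have h1 : f (Function.surjInv hf (f (σ.1⁻¹ (Function.surjInv hf l))))
        = f (σ.1⁻¹ (Function.surjInv hf l)) := Function.surjInv_eq hf _
    have h2 := apply_eq_of_mem_normalizer f σ.2 h1
    rw [h2, Equiv.Perm.apply_inv_self, Function.surjInv_eq hf]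

lemma labelPerm_cover (σ : (Subgroup.normalizer (youngSubgroup f : Set (Equiv.Perm α)))) (a : α) :
    f (σ.1 a) = labelPerm f hf σ (f a) := by
  have h1 : f (Function.surjInv hf (f a)) = f a := Function.surjInv_eq hf _
  exact (apply_eq_of_mem_normalizer f σ.2 h1.symm)

lemma labelPerm_mul (σ τ : (Subgroup.normalizer (youngSubgroup f : Set (Equiv.Perm α)))) :
    labelPerm f hf (σ * τ) = labelPerm f hf σ * labelPerm f hf τ := by
  ext l
  show f ((σ.1 * τ.1) (Function.surjInv hf l)) = _
  rw [Equiv.Perm.mul_apply, labelPerm_cover f hf σ]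
  rfl

/-- `labelPerm` as a monoid hom into `fibreCardSubgroup`. -/
noncomputable def labelHom : (Subgroup.normalizer (youngSubgroup f : Set (Equiv.Perm α))) →* fibreCardSubgroup f :=
  MonoidHom.codRestrict (MonoidHom.mk' (labelPerm f hf) (labelPerm_mul f hf)) _
    (by
      intro σ l
      show Nat.card {a : α // f a = l} = Nat.card {a : α // f a = labelPerm f hf σ l}
      exact Nat.card_congr
        { toFun := fun x => ⟨σ.1 x.1, by rw [labelPerm_cover f hf σ, x.2]⟩
          invFun := fun x => ⟨σ.1⁻¹ x.1, by
            apply (labelPerm f hf σ).injective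
            rw [← labelPerm_cover f hf σ, Equiv.Perm.apply_inv_self, x.2]⟩
          left_inv := fun x => Subtype.ext (Equiv.Perm.inv_apply_self _ _)
          right_inv := fun x => Subtype.ext (Equiv.Perm.apply_inv_self _ _) })

lemma labelHom_ker :
    (labelHom f hf).ker = (youngSubgroup f).subgroupOf (Subgroup.normalizer (youngSubgroup f : Set (Equiv.Perm α))) := by
  ext σ
  constructor
  · intro h a
    have h1 : labelPerm f hf σ = 1 := by
      have := congrArg Subtype.val (MonoidHom.mem_ker.mp h)
      exact this
    show f (σ.1 a) = f a
    rw [labelPerm_cover f hf σ, h1]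
    rfl
  · intro h
    have h' : ∀ a, f (σ.1 a) = f a := h
    have : labelPerm f hf σ = 1 := by
      ext l
      show f (σ.1 (Function.surjInv hf l)) = l
      rw [h' (Function.surjInv hf l), Function.surjInv_eq hf]
    exact MonoidHom.mem_ker.mpr (Subtype.ext this)

lemma labelHom_surjective [Finite α] : Function.Surjective (labelHom f hf) := by
  rintro ⟨τ, hτ⟩
  have he : ∀ l : ι, {a : α // f a = l} ≃ {a : α // f a = τ l} := fun l =>
    (Finite.card_eq.mp (hτ l)).some
  let σ : Equiv.Perm α :=
    (Equiv.sigmaFiberEquiv f).symm.trans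
      ((Equiv.sigmaCongrRight he).trans
        ((Equiv.sigmaCongrLeft (β := fun l => {a : α // f a = l}) (τ : ι ≃ ι)).trans
          (Equiv.sigmaFiberEquiv f)))
  have hσa : ∀ a : α, σ a = (he (f a) ⟨a, rfl⟩).1 := fun a => rfl
  have hcov : ∀ a : α, f (σ a) = τ (f a) := by
    intro a
    rw [hσa a]
    exact (he (f a) ⟨a, rfl⟩).2
  refine ⟨⟨σ, mem_normalizer_of_cover f σ τ hcov⟩, ?_⟩
  apply Subtype.ext
  ext l
  show f (σ (Function.surjInv hf l)) = τ l
  rw [hcov, Function.surjInv_eq hf]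

end NYQAux

/-- The quotient of the normalizer `N` of the Young subgroup `P` by `P` is isomorphic to
the group of permutations of the labels preserving the fibre cardinalities
(classically, `N_{S_n}(W_λ)/W_λ ≅ ∏ₖ S_{aₖ}`). -/
theorem normalizer_young_quotient_iso {α ι : Type*} [Fintype α] [Fintype ι]
    [DecidableEq α] [DecidableEq ι] (f : α → ι) (hf : Function.Surjective f) :
    Nonempty
      ((Subgroup.normalizer (youngSubgroup f : Set (Equiv.Perm α)) ⧸
          (youngSubgroup f).subgroupOf (Subgroup.normalizer (youngSubgroup f : Set (Equiv.Perm α))))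
        ≃* fibreCardSubgroup f) := by
  exact ⟨(QuotientGroup.quotientMulEquivOfEq (NYQAux.labelHom_ker f hf).symm).trans
    (QuotientGroup.quotientKerEquivOfSurjective _ (NYQAux.labelHom_surjective f hf))⟩
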